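/- arXiv:1007.0725 — 8 statements merged into one kernel-verified Lean document; each statement's English description precedes it below -/
import Mathlib

section
/- Let Z be a complex symmetric N×N matrix with positive definite imaginary part, and let S = [[A, B], [C, D]] be a real symplectic 2N×2N matrix. Then A + BZ is invertible. -/
open Matrix
open scoped ComplexOrder

private lemma aux_map_mul {N : ℕ} (A B : Matrix (Fin N) (Fin N) ℝ) :
    (A * B).map Complex.ofReal = A.map Complex.ofReal * B.map Complex.ofReal := by
  ext i j; simp [Matrix.mul_apply]

private lemma aux_star_mulVec {N : ℕ} (A : Matrix (Fin N) (Fin N) ℝ) (x : Fin N → ℂ) :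
    star ((A.map Complex.ofReal) *ᵥ x) = (A.map Complex.ofReal) *ᵥ (star x) := by
  funext i; simp [Matrix.mulVec, dotProduct]

private lemma aux_mulVec_dot {N : ℕ} (M P : Matrix (Fin N) (Fin N) ℂ) (x y : Fin N → ℂ) :
    (M *ᵥ x) ⬝ᵥ (P *ᵥ y) = x ⬝ᵥ ((Mᵀ * P) *ᵥ y) := by
  rw [← mulVec_mulVec]
  rw [show x ⬝ᵥ Mᵀ *ᵥ (P *ᵥ y) = (x ᵥ* Mᵀ) ⬝ᵥ (P *ᵥ y) from dotProduct_mulVec _ _ _,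
    vecMul_transpose]

private lemma aux_symp {N : ℕ} (A B C D : Matrix (Fin N) (Fin N) ℝ)
    (hS : fromBlocks A B C D * fromBlocks (0 : Matrix (Fin N) (Fin N) ℝ) 1 (-1) 0 *
        (fromBlocks A B C D)ᵀ = fromBlocks 0 1 (-1) 0) :
    Aᵀ * C = Cᵀ * A ∧ Aᵀ * D = Cᵀ * B + 1 ∧ Bᵀ * D = Dᵀ * B := by
  set M := fromBlocks A B C D
  set J : Matrix (Fin N ⊕ Fin N) (Fin N ⊕ Fin N) ℝ := fromBlocks 0 1 (-1) 0 with hJ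
  have hJJ : J * (-J) = 1 := by
    simp [hJ, Matrix.fromBlocks_multiply, Matrix.fromBlocks_neg, ← Matrix.fromBlocks_one]
  have hJJ' : (-J) * J = 1 := by
    simp [hJ, Matrix.fromBlocks_multiply, Matrix.fromBlocks_neg, ← Matrix.fromBlocks_one]
  have h1 : M * (J * Mᵀ * -J) = 1 := by
    calc M * (J * Mᵀ * -J) = (M * J * Mᵀ) * -J := by noncomm_ring
    _ = J * -J := by rw [hS]
    _ = 1 := hJJ
  have h2 : (J * Mᵀ * -J) * M = 1 := mul_eq_one_comm.mp h1
  have h3 : Mᵀ * J * M = J := by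
    have h4 : (-J) * (J * Mᵀ * -J * M) = -J := by rw [h2, mul_one]
    have h5 : (-J) * (J * Mᵀ * -J * M) = ((-J) * J) * (Mᵀ * -J * M) := by noncomm_ring
    rw [h5, hJJ', one_mul] at h4
    have : Mᵀ * J * M = -(Mᵀ * -J * M) := by noncomm_ring
    rw [this, h4, neg_neg]
  rw [hJ] at h3
  have hMt : Mᵀ = fromBlocks Aᵀ Cᵀ Bᵀ Dᵀ := by simp [M, Matrix.fromBlocks_transpose]
  rw [hMt] at h3
  simp only [M, Matrix.fromBlocks_multiply] at h3
  have e11 := congrArg Matrix.toBlocks₁₁ h3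
  have e12 := congrArg Matrix.toBlocks₁₂ h3
  have e22 := congrArg Matrix.toBlocks₂₂ h3
  simp only [Matrix.toBlocks_fromBlocks₁₁, Matrix.toBlocks_fromBlocks₁₂,
    Matrix.toBlocks_fromBlocks₂₂] at e11 e12 e22
  simp only [mul_zero, mul_one, mul_neg, neg_mul, zero_add, add_zero, neg_add_eq_zero,
    neg_add_eq_iff_eq_add] at e11 e12 e22
  exact ⟨e11, e12, e22⟩

theorem APlusBZ_invertible {N : ℕ} (Z : Matrix (Fin N) (Fin N) ℂ) (hZsymm : Zᵀ = Z)
    (hImZ : ((2 * Complex.I)⁻¹ • (Z - Z.map (starRingEnd ℂ))).PosDef)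
    (A B C D : Matrix (Fin N) (Fin N) ℝ)
    (hS : fromBlocks A B C D * fromBlocks (0 : Matrix (Fin N) (Fin N) ℝ) 1 (-1) 0 *
        (fromBlocks A B C D)ᵀ = fromBlocks 0 1 (-1) 0) :
    IsUnit (A.map Complex.ofReal + B.map Complex.ofReal * Z) := by
  obtain ⟨h11, h12, h22⟩ := aux_symp A B C D hS
  set a := A.map Complex.ofReal with ha
  set b := B.map Complex.ofReal with hb
  set c := C.map Complex.ofReal with hc
  set d := D.map Complex.ofReal with hd
  -- transfer the identities to ℂ
  have hmapT : ∀ (X : Matrix (Fin N) (Fin N) ℝ),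
      (Xᵀ).map Complex.ofReal = (X.map Complex.ofReal)ᵀ := fun X => rfl
  have h11c : aᵀ * c = cᵀ * a := by
    rw [ha, hc, ← hmapT, ← hmapT, ← aux_map_mul, ← aux_map_mul, h11]
  have h12c : aᵀ * d = cᵀ * b + 1 := by
    have : (Aᵀ * D).map Complex.ofReal = (Cᵀ * B + 1).map Complex.ofReal := by rw [h12]
    have h1map : ((1 : Matrix (Fin N) (Fin N) ℝ)).map Complex.ofReal = 1 := by
      ext i j; simp [Matrix.one_apply]; split <;> simp
    rw [aux_map_mul, Matrix.map_add Complex.ofReal Complex.ofReal_add, aux_map_mul, h1map] at this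
    rw [ha, hb, hc, hd, ← hmapT, ← hmapT]; exact this
  have h22c : bᵀ * d = dᵀ * b := by
    rw [hb, hd, ← hmapT, ← hmapT, ← aux_map_mul, ← aux_map_mul, h22]
  have h12c' : dᵀ * a = bᵀ * c + 1 := by
    have := congrArg Matrix.transpose h12c
    simpa [Matrix.transpose_mul, Matrix.transpose_add] using this
  -- reduce to kernel triviality
  rw [Matrix.isUnit_iff_isUnit_det, isUnit_iff_ne_zero]
  intro hdet
  obtain ⟨v, hv0, hv⟩ := (Matrix.exists_mulVec_eq_zero_iff).mpr hdet
  have hα : a *ᵥ v + b *ᵥ (Z *ᵥ v) = 0 := by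
    rw [mulVec_mulVec, ← add_mulVec]; exact hv
  set p := v
  set q := Z *ᵥ v with hq
  -- the quadratic form vanishes on v
  have key : star p ⬝ᵥ q - star q ⬝ᵥ p = 0 := by
    have expand : star p ⬝ᵥ q - star q ⬝ᵥ p =
        (star (a *ᵥ p + b *ᵥ q)) ⬝ᵥ (c *ᵥ p + d *ᵥ q)
          - (star (c *ᵥ p + d *ᵥ q)) ⬝ᵥ (a *ᵥ p + b *ᵥ q) := by
      rw [star_add, star_add, ha, hb, hc, hd, aux_star_mulVec, aux_star_mulVec,
        aux_star_mulVec, aux_star_mulVec, ← ha, ← hb, ← hc, ← hd]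
      simp only [add_dotProduct, dotProduct_add, aux_mulVec_dot]
      rw [h11c, h12c, h22c, h12c']
      simp only [add_mulVec, one_mulVec, dotProduct_add]
      ring
    rw [expand, hα]
    simp
  have hform : star v ⬝ᵥ ((Z - Z.map (starRingEnd ℂ)) *ᵥ v) = 0 := by
    have hZc : star v ⬝ᵥ ((Z.map (starRingEnd ℂ)) *ᵥ v) = star q ⬝ᵥ p := by
      have hstarq : star q = (Z.map (starRingEnd ℂ)) *ᵥ (star v) := by
        funext i; simp [hq, Matrix.mulVec, dotProduct]
      have hsym : (Z.map (starRingEnd ℂ))ᵀ = Z.map (starRingEnd ℂ) := by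
        rw [← Matrix.transpose_map, hZsymm]
      calc star v ⬝ᵥ ((Z.map (starRingEnd ℂ)) *ᵥ v)
          = (star v ᵥ* (Z.map (starRingEnd ℂ))) ⬝ᵥ v := dotProduct_mulVec _ _ _
        _ = ((Z.map (starRingEnd ℂ))ᵀ *ᵥ star v) ⬝ᵥ v := by rw [← Matrix.mulVec_transpose]
        _ = star q ⬝ᵥ p := by rw [hsym, ← hstarq]
    rw [sub_mulVec, dotProduct_sub, hZc]
    exact key
  have hpos := (Matrix.posDef_iff_dotProduct_mulVec.mp hImZ).2 hv0
  rw [Matrix.smul_mulVec, dotProduct_smul, hform, smul_zero] at hpos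
  exact lt_irrefl 0 hpos
end

section
/- Let Z be a complex symmetric N×N matrix with positive definite imaginary part and S = [[A, B], [C, D]] a real symplectic matrix. Then Im Z' is positive definite, where Z' = (C + DZ)(A + BZ)^{-1}; in fact Im Z = (A + BZ)^H (Im Z') (A + BZ). -/
open Matrix
open scoped ComplexOrder

private lemma posdef_conj_aux {n : ℕ} {Q B : Matrix (Fin n) (Fin n) ℂ}
    (hQ : Q.PosDef) (hB : IsUnit B) : (Bᴴ * Q * B).PosDef := by
  rw [Matrix.posDef_iff_dotProduct_mulVec] at hQ ⊢
  refine ⟨Matrix.isHermitian_conjTranspose_mul_mul B hQ.1, fun x hx => ?_⟩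
  have hinj := Matrix.mulVec_injective_iff_isUnit.mpr hB
  have hBx : B *ᵥ x ≠ 0 := fun h => hx (hinj (by simpa using h))
  simpa only [star_mulVec, dotProduct_mulVec, vecMul_vecMul] using hQ.2 (x := B *ᵥ x) hBx

private lemma map_ofReal_mul {n : ℕ} (X Y : Matrix (Fin n) (Fin n) ℝ) :
    (X * Y).map Complex.ofReal = X.map Complex.ofReal * Y.map Complex.ofReal :=
  Matrix.map_mul (f := Complex.ofRealHom)

private lemma map_ofReal_sub {n : ℕ} (X Y : Matrix (Fin n) (Fin n) ℝ) :
    (X - Y).map Complex.ofReal = X.map Complex.ofReal - Y.map Complex.ofReal := by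
  ext i j; simp [Matrix.map_apply]

private lemma map_ofReal_one {n : ℕ} :
    (1 : Matrix (Fin n) (Fin n) ℝ).map Complex.ofReal = 1 :=
  Matrix.map_one _ (by simp) (by simp)

private lemma map_ofReal_transpose {n : ℕ} (X : Matrix (Fin n) (Fin n) ℝ) :
    Xᵀ.map Complex.ofReal = (X.map Complex.ofReal)ᵀ :=
  Matrix.transpose_map

theorem moebius_image_posdef_im {N : ℕ} (Z : Matrix (Fin N) (Fin N) ℂ) (hZsymm : Zᵀ = Z)
    (hImZ : ((2 * Complex.I)⁻¹ • (Z - Z.map (starRingEnd ℂ))).PosDef)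
    (A B C D : Matrix (Fin N) (Fin N) ℝ)
    (hS : fromBlocks A B C D * fromBlocks (0 : Matrix (Fin N) (Fin N) ℝ) 1 (-1) 0 *
        (fromBlocks A B C D)ᵀ = fromBlocks 0 1 (-1) 0)
    (hInv : IsUnit (A.map Complex.ofReal + B.map Complex.ofReal * Z)) :
    let Z' := (C.map Complex.ofReal + D.map Complex.ofReal * Z) *
      (A.map Complex.ofReal + B.map Complex.ofReal * Z)⁻¹
    ((2 * Complex.I)⁻¹ • (Z' - Z'.map (starRingEnd ℂ))).PosDef ∧
      (2 * Complex.I)⁻¹ • (Z - Z.map (starRingEnd ℂ)) =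
        (A.map Complex.ofReal + B.map Complex.ofReal * Z)ᴴ *
          ((2 * Complex.I)⁻¹ • (Z' - Z'.map (starRingEnd ℂ))) *
          (A.map Complex.ofReal + B.map Complex.ofReal * Z) := by
  intro Z'
  -- Real symplectic relations from S J Sᵀ = J
  rw [fromBlocks_transpose, fromBlocks_multiply, fromBlocks_multiply, fromBlocks_inj] at hS
  simp only [Matrix.mul_zero, Matrix.mul_one, mul_neg_one, add_zero, zero_add, neg_mul,
    Matrix.zero_mul, Matrix.one_mul, Matrix.neg_mul] at hS
  obtain ⟨f1, f2, f3, f4⟩ := hS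
  have f1' : A * Bᵀ = B * Aᵀ := by rwa [neg_add_eq_sub, sub_eq_zero] at f1
  have hST : fromBlocks A B C D * fromBlocks Dᵀ (-Bᵀ) (-Cᵀ) Aᵀ = 1 := by
    rw [fromBlocks_multiply, ← fromBlocks_one, fromBlocks_inj]
    refine ⟨?_, ?_, ?_, ?_⟩
    · rw [mul_neg, add_comm]; exact f2
    · rw [mul_neg, f1', neg_add_cancel]
    · rw [mul_neg, add_comm]; exact f4
    · rw [mul_neg]
      have f3' := congrArg Neg.neg f3
      simp only [neg_add_rev, neg_neg] at f3'
      exact f3'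
  have hTS := mul_eq_one_comm.mp hST
  rw [fromBlocks_multiply, ← fromBlocks_one, fromBlocks_inj] at hTS
  simp only [neg_mul] at hTS
  obtain ⟨g1, g2, g3, g4⟩ := hTS
  -- g1 : Dᵀ*A + -(Bᵀ*C) = 1, g2 : Dᵀ*B + -(Bᵀ*D) = 0,
  -- g3 : -(Cᵀ*A) + Aᵀ*C = 0, g4 : -(Cᵀ*B) + Aᵀ*D = 1
  have r1 : Aᵀ * D - Cᵀ * B = 1 := by rw [sub_eq_add_neg, add_comm]; exact g4
  have r2 : Bᵀ * C - Dᵀ * A = -1 := by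
    have h := congrArg Neg.neg g1
    simp only [neg_add_rev, neg_neg] at h
    rw [sub_eq_add_neg]; exact h
  have r3 : Aᵀ * C - Cᵀ * A = 0 := by rw [sub_eq_add_neg, add_comm]; exact g3
  have r4 : Bᵀ * D - Dᵀ * B = 0 := by
    have h := congrArg Neg.neg g2
    simp only [neg_add_rev, neg_neg, neg_zero] at h
    rw [sub_eq_add_neg]; exact h
  -- Complexified relations
  have mk : ∀ (X Y U V E : Matrix (Fin N) (Fin N) ℝ), Xᵀ * Y - Uᵀ * V = E →
      (X.map Complex.ofReal)ᵀ * Y.map Complex.ofReal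
        - (U.map Complex.ofReal)ᵀ * V.map Complex.ofReal = E.map Complex.ofReal := by
    intro X Y U V E h
    have := congrArg (fun M : Matrix (Fin N) (Fin N) ℝ => M.map Complex.ofReal) h
    simpa only [map_ofReal_sub, map_ofReal_mul, map_ofReal_transpose] using this
  set Ac := A.map Complex.ofReal with hAcd
  set Bc := B.map Complex.ofReal with hBcd
  set Cc := C.map Complex.ofReal with hCcd
  set Dc := D.map Complex.ofReal with hDcd
  have R1 : Acᵀ * Dc - Ccᵀ * Bc = 1 := by
    have := mk A D C B 1 r1; rwa [map_ofReal_one] at this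
  have R2 : Bcᵀ * Cc - Dcᵀ * Ac = -1 := by
    have := mk B C D A (-1) r2
    rw [show ((-1 : Matrix (Fin N) (Fin N) ℝ).map Complex.ofReal) = -1 by
      ext i j; simp [Matrix.map_apply, Matrix.one_apply]; split <;> simp] at this
    exact this
  have R3 : Acᵀ * Cc - Ccᵀ * Ac = 0 := by
    have := mk A C C A 0 r3
    rw [show ((0 : Matrix (Fin N) (Fin N) ℝ).map Complex.ofReal) = 0 by
      ext i j; simp [Matrix.map_apply]] at this
    exact this
  have R4 : Bcᵀ * Dc - Dcᵀ * Bc = 0 := by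
    have := mk B D D B 0 r4
    rw [show ((0 : Matrix (Fin N) (Fin N) ℝ).map Complex.ofReal) = 0 by
      ext i j; simp [Matrix.map_apply]] at this
    exact this
  -- Notation
  set M : Matrix (Fin N) (Fin N) ℂ := Ac + Bc * Z with hMd
  set P : Matrix (Fin N) (Fin N) ℂ := Cc + Dc * Z with hPd
  set Zb : Matrix (Fin N) (Fin N) ℂ := Z.map (starRingEnd ℂ) with hZbd
  -- conjugate transposes of real matrices
  have hAH : Acᴴ = Acᵀ := by
    ext i j; simp [hAcd, conjTranspose_apply, Matrix.map_apply, Complex.conj_ofReal]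
  have hBH : Bcᴴ = Bcᵀ := by
    ext i j; simp [hBcd, conjTranspose_apply, Matrix.map_apply, Complex.conj_ofReal]
  have hCH : Ccᴴ = Ccᵀ := by
    ext i j; simp [hCcd, conjTranspose_apply, Matrix.map_apply, Complex.conj_ofReal]
  have hDH : Dcᴴ = Dcᵀ := by
    ext i j; simp [hDcd, conjTranspose_apply, Matrix.map_apply, Complex.conj_ofReal]
  have hZH : Zᴴ = Zb := by
    ext i j
    rw [conjTranspose_apply, hZbd, Matrix.map_apply, starRingEnd_apply]
    congr 1
    conv_lhs => rw [← hZsymm]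
    rfl
  -- key identity
  have hkey : Mᴴ * P - Pᴴ * M = Z - Zb := by
    rw [hMd, hPd, conjTranspose_add, conjTranspose_add, conjTranspose_mul, conjTranspose_mul,
      hAH, hBH, hCH, hDH, hZH]
    calc (Acᵀ + Zb * Bcᵀ) * (Cc + Dc * Z) - (Ccᵀ + Zb * Dcᵀ) * (Ac + Bc * Z)
        = (Acᵀ * Cc - Ccᵀ * Ac) + (Acᵀ * Dc - Ccᵀ * Bc) * Z
            + Zb * (Bcᵀ * Cc - Dcᵀ * Ac) + Zb * ((Bcᵀ * Dc - Dcᵀ * Bc) * Z) := by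
          noncomm_ring
      _ = Z - Zb := by rw [R1, R2, R3, R4]; noncomm_ring
  -- symmetry of Z'
  have hZT : Zᵀ = Z := hZsymm
  have hsymPM : Pᵀ * M = Mᵀ * P := by
    rw [hMd, hPd, transpose_add, transpose_add, transpose_mul, transpose_mul, hZT]
    rw [← sub_eq_zero]
    calc (Ccᵀ + Z * Dcᵀ) * (Ac + Bc * Z) - (Acᵀ + Z * Bcᵀ) * (Cc + Dc * Z)
        = -(Acᵀ * Cc - Ccᵀ * Ac) - (Acᵀ * Dc - Ccᵀ * Bc) * Z
            - Z * (Bcᵀ * Cc - Dcᵀ * Ac) - Z * ((Bcᵀ * Dc - Dcᵀ * Bc) * Z) := by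
          noncomm_ring
      _ = 0 := by rw [R1, R2, R3, R4]; noncomm_ring
  -- invertibility facts
  have hdet : IsUnit M.det := (Matrix.isUnit_iff_isUnit_det M).mp hInv
  have hMi : M * M⁻¹ = 1 := Matrix.mul_nonsing_inv M hdet
  have hMi' : M⁻¹ * M = 1 := Matrix.nonsing_inv_mul M hdet
  have hdetT : IsUnit Mᵀ.det := by rwa [Matrix.det_transpose]
  have hZ'M : Z' * M = P := by
    show P * M⁻¹ * M = P
    rw [mul_assoc, hMi', mul_one]
  have hZ'T : Z'ᵀ = Z' := by
    show (P * M⁻¹)ᵀ = P * M⁻¹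
    rw [transpose_mul, Matrix.transpose_nonsing_inv]
    have h1 : Pᵀ = Mᵀ * (P * M⁻¹) := by
      calc Pᵀ = Pᵀ * (M * M⁻¹) := by rw [hMi, mul_one]
        _ = Pᵀ * M * M⁻¹ := by rw [mul_assoc]
        _ = Mᵀ * P * M⁻¹ := by rw [hsymPM]
        _ = Mᵀ * (P * M⁻¹) := by rw [mul_assoc]
    rw [h1, ← mul_assoc, Matrix.nonsing_inv_mul _ hdetT, one_mul]
  have hZ'b : Z'.map (starRingEnd ℂ) = Z'ᴴ := by
    show Z'.map (starRingEnd ℂ) = Z'ᵀ.map star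
    rw [hZ'T]
    rfl
  have hMHi : Mᴴ * Z'ᴴ = Pᴴ := by rw [← conjTranspose_mul, hZ'M]
  -- main identity
  have main : (2 * Complex.I)⁻¹ • (Z - Zb) =
      Mᴴ * ((2 * Complex.I)⁻¹ • (Z' - Z'ᴴ)) * M := by
    rw [Matrix.mul_smul, Matrix.smul_mul]
    congr 1
    rw [mul_sub, sub_mul, mul_assoc Mᴴ Z' M, hZ'M, hMHi, hkey]
  constructor
  · -- positive definiteness
    rw [hZ'b]
    have hBu : IsUnit (M⁻¹) := Matrix.isUnit_nonsing_inv_iff.mpr hInv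
    have hpd := posdef_conj_aux hImZ hBu
    have heq : (M⁻¹)ᴴ * ((2 * Complex.I)⁻¹ • (Z - Zb)) * M⁻¹ =
        (2 * Complex.I)⁻¹ • (Z' - Z'ᴴ) := by
      rw [main, mul_assoc Mᴴ _ M, ← mul_assoc (M⁻¹)ᴴ Mᴴ _, ← conjTranspose_mul, hMi,
        conjTranspose_one, one_mul, mul_assoc, hMi, mul_one]
    rw [← heq]
    exact hpd
  · rw [hZ'b]
    exact main
end

section
/- Let Z = V + iU with U symmetric positive definite and V symmetric, and let Σ = (1/2)[[U^{-1}, U^{-1}V], [VU^{-1}, U + VU^{-1}V]]. Then 2Σ is symplectic and Σ is positive definite. -/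
open Matrix

private lemma posDef_smul_half {n : Type*} [Fintype n] {M : Matrix n n ℝ}
    (hM : M.PosDef) : ((1/2 : ℝ) • M).PosDef := by
  refine Matrix.PosDef.of_dotProduct_mulVec_pos ?_ (fun x hx => ?_)
  · unfold Matrix.IsHermitian
    rw [conjTranspose_smul, hM.1]
    simp
  · have h := hM.dotProduct_mulVec_pos hx
    rw [smul_mulVec, dotProduct_smul]
    positivity

private lemma posDef_conj {n : Type*} [Fintype n] [DecidableEq n]
    {M : Matrix n n ℝ} (hM : M.PosDef) (B : Matrix n n ℝ) (hB : IsUnit B) :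
    (B * M * Bᵀ).PosDef := by
  have hBt : Bᵀ = Bᴴ := (conjTranspose_eq_transpose_of_trivial B).symm
  refine Matrix.PosDef.of_dotProduct_mulVec_pos ?_ (fun x hx => ?_)
  · rw [hBt]
    exact isHermitian_mul_mul_conjTranspose B hM.1
  · have hinj : Function.Injective (Bᵀ.mulVec) :=
      mulVec_injective_iff_isUnit.mpr ((Matrix.isUnit_transpose B).mpr hB)
    have hy : Bᵀ *ᵥ x ≠ 0 := by
      intro h
      exact hx (hinj (by simpa using h))
    have h := hM.dotProduct_mulVec_pos hy
    have : star x ⬝ᵥ (B * M * Bᵀ) *ᵥ x = star (Bᵀ *ᵥ x) ⬝ᵥ M *ᵥ (Bᵀ *ᵥ x) := by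
      simp only [star_trivial, ← mulVec_mulVec, Matrix.mul_assoc]
      rw [dotProduct_mulVec x B, ← transpose_transpose B, vecMul_transpose, transpose_transpose]
    rw [this]
    exact h

private lemma posDef_fromBlocks_diag {n m : Type*} [Fintype n] [Fintype m]
    {A : Matrix n n ℝ} {D : Matrix m m ℝ} (hA : A.PosDef) (hD : D.PosDef) :
    (fromBlocks A 0 0 D).PosDef := by
  refine Matrix.PosDef.of_dotProduct_mulVec_pos ?_ (fun x hx => ?_)
  · unfold Matrix.IsHermitian
    rw [fromBlocks_conjTranspose, hA.1, hD.1]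
    simp
  · rw [fromBlocks_mulVec, dotProduct_block]
    simp only [star_trivial, Sum.elim_comp_inl, Sum.elim_comp_inr, Matrix.zero_mulVec,
      add_zero, zero_add]
    have hcases : x ∘ Sum.inl ≠ 0 ∨ x ∘ Sum.inr ≠ 0 := by
      by_contra h
      push_neg at h
      apply hx
      ext i
      cases i with
      | inl i => exact congrFun h.1 i
      | inr i => exact congrFun h.2 i
    rcases hcases with h | h
    · have h1 := hA.dotProduct_mulVec_pos h
      have h2 := hD.posSemidef.dotProduct_mulVec_nonneg (x ∘ Sum.inr)
      simp only [star_trivial] at h1 h2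
      linarith
    · have h1 := hA.posSemidef.dotProduct_mulVec_nonneg (x ∘ Sum.inl)
      have h2 := hD.dotProduct_mulVec_pos h
      simp only [star_trivial] at h1 h2
      linarith

theorem sigmaZ_symplectic_and_posdef {N : ℕ} (U V : Matrix (Fin N) (Fin N) ℝ)
    (hU : U.PosDef) (hUsymm : Uᵀ = U) (hVsymm : Vᵀ = V)
    (Sig : Matrix (Fin N ⊕ Fin N) (Fin N ⊕ Fin N) ℝ)
    (hSig : Sig = (1/2 : ℝ) • fromBlocks U⁻¹ (U⁻¹ * V) (V * U⁻¹) (U + V * U⁻¹ * V)) :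
    ((2:ℝ) • Sig) * fromBlocks (0 : Matrix (Fin N) (Fin N) ℝ) 1 (-1) 0 * ((2:ℝ) • Sig)ᵀ =
        fromBlocks 0 1 (-1) 0 ∧
      Sig.PosDef := by
  have hUdet : IsUnit U.det := hU.det_pos.ne'.isUnit
  have hUU : U * U⁻¹ = 1 := mul_nonsing_inv U hUdet
  have hUU' : U⁻¹ * U = 1 := nonsing_inv_mul U hUdet
  have hUit : (U⁻¹)ᵀ = U⁻¹ := by rw [transpose_nonsing_inv, hUsymm]
  have hBt : (U⁻¹ * V)ᵀ = V * U⁻¹ := by rw [transpose_mul, hUit, hVsymm]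
  have hCt : (V * U⁻¹)ᵀ = U⁻¹ * V := by rw [transpose_mul, hUit, hVsymm]
  have hDt : (U + V * U⁻¹ * V)ᵀ = U + V * U⁻¹ * V := by
    rw [transpose_add, hUsymm, transpose_mul, transpose_mul, hUit, hVsymm, Matrix.mul_assoc]
  constructor
  · subst hSig
    rw [smul_smul]
    norm_num
    rw [fromBlocks_transpose, hUit, hBt, hCt, hDt, fromBlocks_multiply, fromBlocks_multiply]
    have hUUc : ∀ X : Matrix (Fin N) (Fin N) ℝ, U * (U⁻¹ * X) = X := fun X => by
      rw [← Matrix.mul_assoc, hUU, Matrix.one_mul]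
    have hUU'c : ∀ X : Matrix (Fin N) (Fin N) ℝ, U⁻¹ * (U * X) = X := fun X => by
      rw [← Matrix.mul_assoc, hUU', Matrix.one_mul]
    rw [fromBlocks_inj]
    refine ⟨?_, ?_, ?_, ?_⟩ <;>
      · simp only [Matrix.mul_zero, Matrix.mul_one, Matrix.mul_neg, Matrix.neg_mul,
          Matrix.zero_mul, zero_add, add_zero, Matrix.mul_add, Matrix.add_mul,
          Matrix.mul_assoc, hUU, hUU', hUUc, hUU'c, Matrix.one_mul]
        abel
  · -- positive definiteness
    have hfact : fromBlocks U⁻¹ (U⁻¹ * V) (V * U⁻¹) (U + V * U⁻¹ * V) =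
        (fromBlocks 1 0 V 1) * (fromBlocks U⁻¹ 0 0 U) * (fromBlocks 1 0 V 1)ᵀ := by
      rw [fromBlocks_transpose, fromBlocks_multiply, fromBlocks_multiply]
      simp only [Matrix.one_mul, Matrix.mul_one, Matrix.mul_zero, Matrix.zero_mul,
        add_zero, zero_add, transpose_one, transpose_zero, hVsymm]
      rw [Matrix.mul_assoc, add_comm (V * (U⁻¹ * V)) U]
    have hPunit : IsUnit (fromBlocks (1 : Matrix (Fin N) (Fin N) ℝ) (0 : Matrix (Fin N) (Fin N) ℝ) V (1 : Matrix (Fin N) (Fin N) ℝ)) := by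
      rw [Matrix.isUnit_iff_isUnit_det, det_fromBlocks_zero₁₂]
      simp
    have hDiag : (fromBlocks U⁻¹ (0 : Matrix (Fin N) (Fin N) ℝ) 0 U).PosDef :=
      posDef_fromBlocks_diag hU.inv hU
    rw [hSig, hfact]
    exact posDef_smul_half (posDef_conj hDiag _ hPunit)
end

section
/- For the local symplectic transformation S_LG = [[a, b], [c, d]] (ad - bc = 1) applied to the first mode of an N-mode Gaussian graph Z = [[t, rᵀ], [r, W]] (t ∈ ℂ, r ∈ ℂ^{N-1}, W complex symmetric), the transformed graph is Z' = [[(c+dt)/(a+bt), rᵀ/(a+bt)], [r/(a+bt), W - b r rᵀ/(a+bt)]], provided a + bt ≠ 0. -/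
open Matrix

theorem local_gaussian_graph_rule {m : ℕ} (a b c d : ℝ) (hdet : a * d - b * c = 1)
    (t : ℂ) (r : Matrix (Fin m) Unit ℂ) (W : Matrix (Fin m) (Fin m) ℂ) (hWsymm : Wᵀ = W)
    (hden : (a : ℂ) + b * t ≠ 0) :
    let T : Matrix Unit Unit ℂ := Matrix.of fun _ _ => t
    let Z : Matrix (Unit ⊕ Fin m) (Unit ⊕ Fin m) ℂ := fromBlocks T rᵀ r W
    let Atil : Matrix (Unit ⊕ Fin m) (Unit ⊕ Fin m) ℂ :=
      fromBlocks ((a : ℂ) • (1 : Matrix Unit Unit ℂ)) 0 0 1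
    let Btil : Matrix (Unit ⊕ Fin m) (Unit ⊕ Fin m) ℂ :=
      fromBlocks ((b : ℂ) • (1 : Matrix Unit Unit ℂ)) 0 0 0
    let Ctil : Matrix (Unit ⊕ Fin m) (Unit ⊕ Fin m) ℂ :=
      fromBlocks ((c : ℂ) • (1 : Matrix Unit Unit ℂ)) 0 0 0
    let Dtil : Matrix (Unit ⊕ Fin m) (Unit ⊕ Fin m) ℂ :=
      fromBlocks ((d : ℂ) • (1 : Matrix Unit Unit ℂ)) 0 0 1
    (Ctil + Dtil * Z) * (Atil + Btil * Z)⁻¹ =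
      fromBlocks ((((c : ℂ) + d * t) / ((a : ℂ) + b * t)) • (1 : Matrix Unit Unit ℂ))
        (((a : ℂ) + b * t)⁻¹ • rᵀ) (((a : ℂ) + b * t)⁻¹ • r)
        (W - ((b : ℂ) / ((a : ℂ) + b * t)) • (r * rᵀ)) := by
  intro T Z Atil Btil Ctil Dtil
  have hT : T = t • (1 : Matrix Unit Unit ℂ) := by
    ext i j
    simp [T, Matrix.one_apply, Subsingleton.elim i j]
  set k : ℂ := (a : ℂ) + b * t with hk
  have hM : Atil + Btil * Z = fromBlocks (k • (1 : Matrix Unit Unit ℂ)) ((b:ℂ) • rᵀ) 0 1 := by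
    simp only [Atil, Btil, Z, Matrix.fromBlocks_multiply, Matrix.fromBlocks_add, hT,
      Matrix.smul_mul, Matrix.mul_smul, Matrix.one_mul, Matrix.zero_mul, Matrix.mul_zero,
      add_zero, zero_add, smul_smul, smul_zero]
    congr 1
    rw [← add_smul, hk, mul_comm]
  have hdetM : IsUnit (Atil + Btil * Z).det := by
    rw [hM, Matrix.det_fromBlocks_zero₂₁]
    simpa [Matrix.det_unique, isUnit_iff_ne_zero] using hden
  have : Invertible (Atil + Btil * Z) := (Atil + Btil * Z).invertibleOfIsUnitDet hdetM
  rw [Matrix.mul_inv_eq_iff_eq_mul_of_invertible, hM]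
  have hC : Ctil + Dtil * Z =
      fromBlocks (((c:ℂ) + d * t) • (1 : Matrix Unit Unit ℂ)) ((d:ℂ) • rᵀ) r W := by
    simp only [Ctil, Dtil, Z, Matrix.fromBlocks_multiply, Matrix.fromBlocks_add, hT,
      Matrix.smul_mul, Matrix.mul_smul, Matrix.one_mul, Matrix.zero_mul, Matrix.mul_zero,
      add_zero, zero_add, smul_smul, smul_zero]
    congr 1
    rw [← add_smul, mul_comm]
  rw [hC, Matrix.fromBlocks_multiply]
  have hdetC : (a : ℂ) * d - b * c = 1 := by
    exact_mod_cast congrArg (Complex.ofReal) hdet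
  simp only [Matrix.smul_mul, Matrix.mul_smul, Matrix.one_mul, Matrix.mul_one,
    Matrix.zero_mul, Matrix.mul_zero, add_zero, zero_add, smul_smul]
  rw [Matrix.fromBlocks_inj]
  refine ⟨?_, ?_, ?_, ?_⟩
  · congr 1
    field_simp
  · rw [← add_smul]
    congr 1
    field_simp
    linear_combination hdetC
  · rw [mul_inv_cancel₀ hden, one_smul]
  · rw [← div_eq_mul_inv]
    abel
end

section
/- For an n-local symplectic operation S_{n-local} = [[A,B],[C,D]] acting on the first n modes of an (n+p)-mode graph Z = [[T, Rᵀ],[R, W]], and with J = (A + BT)^{-1}, the transformed graph is Z' = [[(C+DT)J, Jᵀ Rᵀ], [RJ, W - RJB Rᵀ]]. In particular, the off-diagonal consistency -(C+DT)JB Rᵀ + DRᵀ = Jᵀ Rᵀ holds. -/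
open Matrix

theorem nlocal_gaussian_graph_rule {n p : ℕ} (A B C D : Matrix (Fin n) (Fin n) ℝ)
    (hsymp₁ : Aᵀ * D - Cᵀ * B = 1) (hsymp₂ : Dᵀ * B = Bᵀ * D)
    (T : Matrix (Fin n) (Fin n) ℂ) (hTsymm : Tᵀ = T)
    (R : Matrix (Fin p) (Fin n) ℂ) (W : Matrix (Fin p) (Fin p) ℂ) (hWsymm : Wᵀ = W)
    (hInv : IsUnit (A.map Complex.ofReal + B.map Complex.ofReal * T))
    (hZ'symm : ((C.map Complex.ofReal + D.map Complex.ofReal * T) *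
          (A.map Complex.ofReal + B.map Complex.ofReal * T)⁻¹)ᵀ =
        (C.map Complex.ofReal + D.map Complex.ofReal * T) *
          (A.map Complex.ofReal + B.map Complex.ofReal * T)⁻¹) :
    let A' := A.map Complex.ofReal
    let B' := B.map Complex.ofReal
    let C' := C.map Complex.ofReal
    let D' := D.map Complex.ofReal
    let J := (A' + B' * T)⁻¹
    (fromBlocks C' 0 0 0 + fromBlocks D' 0 0 1 * fromBlocks T Rᵀ R W) *
          (fromBlocks A' 0 0 1 + fromBlocks B' 0 0 0 * fromBlocks T Rᵀ R W)⁻¹ =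
        fromBlocks ((C' + D' * T) * J) (Jᵀ * Rᵀ) (R * J) (W - R * J * B' * Rᵀ) ∧
      -((C' + D' * T) * J * B' * Rᵀ) + D' * Rᵀ = Jᵀ * Rᵀ := by
  intro A' B' C' D' J
  set M := A' + B' * T with hM
  set S := C' + D' * T with hS
  have hdet : IsUnit M.det := (Matrix.isUnit_iff_isUnit_det _).mp hInv
  have hMJ : M * J = 1 := Matrix.mul_nonsing_inv _ hdet
  have hJM : J * M = 1 := Matrix.nonsing_inv_mul _ hdet
  -- complexified symplectic relations
  have hs1c : A'ᵀ * D' - C'ᵀ * B' = 1 := by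
    have := congrArg (fun X : Matrix (Fin n) (Fin n) ℝ =>
      X.map (Complex.ofRealHom : ℝ →+* ℂ)) hsymp₁
    simp only [Matrix.map_sub _ (map_sub Complex.ofRealHom), Matrix.map_mul] at this
    simpa [Matrix.map_sub, Matrix.map_mul, Matrix.map_one, Matrix.transpose_map,
      A', B', C', D', show (⇑Complex.ofRealHom : ℝ → ℂ) = Complex.ofReal from rfl] using this
  have hs2c : D'ᵀ * B' = B'ᵀ * D' := by
    have := congrArg (fun X : Matrix (Fin n) (Fin n) ℝ =>
      X.map (Complex.ofRealHom : ℝ →+* ℂ)) hsymp₂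
    simp only [Matrix.map_mul] at this
    simpa [Matrix.map_mul, Matrix.transpose_map, A', B', C', D',
      show (⇑Complex.ofRealHom : ℝ → ℂ) = Complex.ofReal from rfl] using this
  -- symmetry relation  Mᵀ S = Sᵀ M
  have hMS : Mᵀ * S = Sᵀ * M := by
    have h0 : Jᵀ * Sᵀ = S * J := by
      simpa [Matrix.transpose_mul] using hZ'symm
    have h1 : Mᵀ * (Jᵀ * Sᵀ) = Mᵀ * (S * J) := by rw [h0]
    have hMJt : Mᵀ * Jᵀ = 1 := by
      have := congrArg Matrix.transpose hJM
      simpa [Matrix.transpose_mul] using this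
    have h2 : Sᵀ = Mᵀ * S * J := by
      rw [← mul_assoc, hMJt, one_mul] at h1
      rw [h1, mul_assoc]
    calc Mᵀ * S = Mᵀ * S * (J * M) := by rw [hJM, mul_one]
      _ = (Mᵀ * S * J) * M := by rw [mul_assoc, mul_assoc, mul_assoc]
      _ = Sᵀ * M := by rw [← h2]
  -- the key identity
  have h1 : Mᵀ * (D' - S * J * B') = 1 := by
    have hMSJB : Mᵀ * (S * J * B') = Sᵀ * B' := by
      rw [mul_assoc S J B', ← mul_assoc Mᵀ S (J * B'), hMS,
        mul_assoc Sᵀ M (J * B'), ← mul_assoc M J B', hMJ, one_mul]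
    rw [mul_sub, hMSJB, hM, hS, Matrix.transpose_add, Matrix.transpose_add,
      Matrix.transpose_mul, Matrix.transpose_mul, hTsymm, add_mul, add_mul,
      mul_assoc, mul_assoc, hs2c]
    rw [add_sub_add_right_eq_sub, hs1c]
  have hkey : -(S * J * B') + D' = Jᵀ := by
    have h2 : (Mᵀ)⁻¹ = D' - S * J * B' := inv_eq_right_inv h1
    have h3 : Jᵀ = (Mᵀ)⁻¹ := Matrix.transpose_nonsing_inv M
    rw [h3, h2, sub_eq_neg_add]
  have hkeyR : -(S * J * B' * Rᵀ) + D' * Rᵀ = Jᵀ * Rᵀ := by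
    have h := congrArg (fun X => X * Rᵀ) hkey
    simp only [Matrix.add_mul, Matrix.neg_mul] at h
    exact h
  constructor
  · -- block form of the statement
    have hnum : fromBlocks C' 0 0 0 + fromBlocks D' 0 0 1 * fromBlocks T Rᵀ R W =
        fromBlocks S (D' * Rᵀ) R W := by
      simp [Matrix.fromBlocks_multiply, Matrix.fromBlocks_add, hS]
    have hden : fromBlocks A' 0 0 1 + fromBlocks B' 0 0 0 * fromBlocks T Rᵀ R W =
        fromBlocks M (B' * Rᵀ) 0 (1 : Matrix (Fin p) (Fin p) ℂ) := by
      simp [Matrix.fromBlocks_multiply, Matrix.fromBlocks_add, hM]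
    have hdeninv : (fromBlocks M (B' * Rᵀ) 0 (1 : Matrix (Fin p) (Fin p) ℂ))⁻¹ =
        fromBlocks J (-(J * (B' * Rᵀ))) 0 1 := by
      apply inv_eq_right_inv
      rw [Matrix.fromBlocks_multiply]
      have hmm : M * (J * (B' * Rᵀ)) = B' * Rᵀ := by
        rw [← Matrix.mul_assoc, hMJ, Matrix.one_mul]
      simp [hMJ, Matrix.mul_neg, hmm, Matrix.fromBlocks_one]
    have e12 : S * -(J * (B' * Rᵀ)) + D' * Rᵀ = Jᵀ * Rᵀ := by
      rw [Matrix.mul_neg, ← Matrix.mul_assoc S J (B' * Rᵀ),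
        ← Matrix.mul_assoc (S * J) B' Rᵀ]
      exact hkeyR
    have e22 : R * -(J * (B' * Rᵀ)) + W = W - R * J * B' * Rᵀ := by
      rw [Matrix.mul_neg, ← Matrix.mul_assoc R J (B' * Rᵀ),
        ← Matrix.mul_assoc (R * J) B' Rᵀ, neg_add_eq_sub]
    rw [hnum, hden, hdeninv, Matrix.fromBlocks_multiply]
    simp only [Matrix.mul_zero, Matrix.mul_one, add_zero]
    rw [e12, e22]
  · exact hkeyR
end

section
/- For the two-mode squeezed graph Z₁' = [[i sech 2α, tanh 2α],[tanh 2α, i sech 2α]] with U = Im Z₁' and V = Re Z₁', the efficiency conditions (U + VU^{-1}V - U^{-1})_{jj} = 0 and (VU^{-1})_{jj} = 0 hold for j = 1, 2. -/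
open Matrix

theorem two_mode_cluster_efficiency (α : ℝ) (hα : 0 < α) :
    let U : Matrix (Fin 2) (Fin 2) ℝ := (Real.cosh (2 * α))⁻¹ • 1
    let V : Matrix (Fin 2) (Fin 2) ℝ := Real.tanh (2 * α) • !![0, 1; 1, 0]
    ∀ j : Fin 2, (U + V * U⁻¹ * V - U⁻¹) j j = 0 ∧ (V * U⁻¹) j j = 0 := by
  intro U V j
  have hc : Real.cosh (2 * α) ≠ 0 := (Real.cosh_pos _).ne'
  have hU : U⁻¹ = Real.cosh (2 * α) • (1 : Matrix (Fin 2) (Fin 2) ℝ) := by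
    apply inv_eq_right_inv
    simp [U, smul_smul, mul_inv_cancel₀ hc]
  have hid : Real.cosh (2 * α) ^ 2 - Real.sinh (2 * α) ^ 2 = 1 :=
    Real.cosh_sq_sub_sinh_sq (2 * α)
  constructor <;> fin_cases j <;>
    simp [U, V, hU, Matrix.mul_apply, Fin.sum_univ_two, Real.tanh_eq_sinh_div_cosh] <;>
    field_simp <;> nlinarith [hid]
end

section
/- If G is self-inverse (G² = I) and bipartite with blocks G = [[0, G₀ᵀ],[G₀, 0]] where G₀ᵀG₀ = G₀G₀ᵀ = I, then applying the Fourier Möbius transformation to the first block of nodes of Z = i cosh(2α) I - i sinh(2α) G yields Z' = i sech(2α) I + tanh(2α) G. -/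
open Matrix

theorem bipartite_selfinverse_fourier_rule {Nb : ℕ} (G₀ : Matrix (Fin Nb) (Fin Nb) ℝ)
    (hG₀₁ : G₀ᵀ * G₀ = 1) (hG₀₂ : G₀ * G₀ᵀ = 1) (α : ℝ) (hα : 0 < α) :
    let Gc : Matrix (Fin Nb ⊕ Fin Nb) (Fin Nb ⊕ Fin Nb) ℂ :=
      (fromBlocks 0 G₀ᵀ G₀ 0).map Complex.ofReal
    let Z : Matrix (Fin Nb ⊕ Fin Nb) (Fin Nb ⊕ Fin Nb) ℂ :=
      (Complex.I * Real.cosh (2 * α)) • 1 - (Complex.I * Real.sinh (2 * α)) • Gc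
    let A : Matrix (Fin Nb ⊕ Fin Nb) (Fin Nb ⊕ Fin Nb) ℂ :=
      fromBlocks 0 0 0 1
    let B : Matrix (Fin Nb ⊕ Fin Nb) (Fin Nb ⊕ Fin Nb) ℂ :=
      fromBlocks (-(1 : Matrix (Fin Nb) (Fin Nb) ℂ)) 0 0 0
    let C : Matrix (Fin Nb ⊕ Fin Nb) (Fin Nb ⊕ Fin Nb) ℂ :=
      fromBlocks 1 0 0 0
    let D : Matrix (Fin Nb ⊕ Fin Nb) (Fin Nb ⊕ Fin Nb) ℂ :=
      fromBlocks 0 0 0 1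
    (C + D * Z) * (A + B * Z)⁻¹ =
      (Complex.I * ((Real.cosh (2 * α) : ℂ))⁻¹) • 1 + (Real.tanh (2 * α) : ℂ) • Gc := by
  intro Gc Z A B C D
  set c : ℂ := (Real.cosh (2 * α) : ℂ) with hc_def
  set s : ℂ := (Real.sinh (2 * α) : ℂ) with hs_def
  have hc : c ≠ 0 := by
    rw [hc_def]
    exact Complex.ofReal_ne_zero.mpr (Real.cosh_pos (2 * α)).ne'
  have hcs : c * c⁻¹ = 1 := mul_inv_cancel₀ hc
  have hsq : c * c - s * s = 1 := by
    have h := Real.cosh_sq_sub_sinh_sq (2 * α)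
    rw [hc_def, hs_def]
    norm_cast
    nlinarith [h]
  set g : Matrix (Fin Nb) (Fin Nb) ℂ := G₀.map Complex.ofReal with hg_def
  set gT : Matrix (Fin Nb) (Fin Nb) ℂ := G₀ᵀ.map Complex.ofReal with hgT_def
  have hmul2 : g * gT = 1 := by
    have h := map_mul (Complex.ofRealHom.mapMatrix (m := Fin Nb)) G₀ G₀ᵀ
    rw [hG₀₂] at h
    have h' : G₀.map ⇑Complex.ofRealHom * G₀ᵀ.map ⇑Complex.ofRealHom = 1 := by
      simpa [RingHom.mapMatrix_apply, hg_def, hgT_def] using h.symm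
    exact h'
  have hGc : Gc = fromBlocks 0 gT g 0 := by
    simp [Gc, Matrix.fromBlocks_map, hg_def, hgT_def]
  have hZ : Z = fromBlocks ((Complex.I * c) • 1) ((-(Complex.I * s)) • gT)
      ((-(Complex.I * s)) • g) ((Complex.I * c) • 1) := by
    show (Complex.I * c) • (1 : Matrix (Fin Nb ⊕ Fin Nb) (Fin Nb ⊕ Fin Nb) ℂ)
        - (Complex.I * s) • Gc = _
    rw [hGc, ← Matrix.fromBlocks_one (l := Fin Nb) (m := Fin Nb) (α := ℂ),
      Matrix.fromBlocks_smul, Matrix.fromBlocks_smul, sub_eq_add_neg,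
      Matrix.fromBlocks_neg, Matrix.fromBlocks_add, Matrix.fromBlocks_inj]
    refine ⟨?_, ?_, ?_, ?_⟩ <;> simp
  have hM : A + B * Z = fromBlocks ((-(Complex.I * c)) • 1) ((Complex.I * s) • gT) 0 1 := by
    show fromBlocks 0 0 0 1 + fromBlocks (-(1 : Matrix (Fin Nb) (Fin Nb) ℂ)) 0 0 0 * Z = _
    rw [hZ, Matrix.fromBlocks_multiply, Matrix.fromBlocks_add, Matrix.fromBlocks_inj]
    refine ⟨?_, ?_, ?_, ?_⟩ <;> simp [Matrix.mul_smul]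
  set P : Matrix (Fin Nb ⊕ Fin Nb) (Fin Nb ⊕ Fin Nb) ℂ :=
    fromBlocks ((Complex.I * c⁻¹) • 1) ((s * c⁻¹) • gT) 0 1 with hP_def
  have hinv : (A + B * Z)⁻¹ = P := by
    apply Matrix.inv_eq_right_inv
    rw [hM, hP_def, Matrix.fromBlocks_multiply,
      ← Matrix.fromBlocks_one (l := Fin Nb) (m := Fin Nb) (α := ℂ), Matrix.fromBlocks_inj]
    refine ⟨?_, ?_, by simp, by simp⟩
    · rw [Matrix.smul_mul, Matrix.mul_smul, smul_smul]
      have h1 : -(Complex.I * c) * (Complex.I * c⁻¹) = 1 := by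
        have he : -(Complex.I * c) * (Complex.I * c⁻¹)
            = -(Complex.I * Complex.I) * (c * c⁻¹) := by ring
        rw [he, Complex.I_mul_I, hcs]; ring
      simp [h1]
    · have h2 : -(Complex.I * c) * (s * c⁻¹) + Complex.I * s = 0 := by
        have he : -(Complex.I * c) * (s * c⁻¹) + Complex.I * s
            = -(Complex.I * s) * (c * c⁻¹) + Complex.I * s := by ring
        rw [he, hcs]; ring
      rw [Matrix.mul_one, Matrix.smul_mul, Matrix.mul_smul, smul_smul, Matrix.one_mul,
        ← add_smul, h2, zero_smul]
  rw [hinv]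
  have hCD : C + D * Z = fromBlocks 1 0 ((-(Complex.I * s)) • g) ((Complex.I * c) • 1) := by
    show fromBlocks 1 0 0 0 + fromBlocks 0 0 0 1 * Z = _
    rw [hZ, Matrix.fromBlocks_multiply, Matrix.fromBlocks_add, Matrix.fromBlocks_inj]
    refine ⟨?_, ?_, ?_, ?_⟩ <;> simp
  have htanh : (Real.tanh (2 * α) : ℂ) = s * c⁻¹ := by
    rw [Real.tanh_eq_sinh_div_cosh, hs_def, hc_def]
    push_cast
    rw [div_eq_mul_inv]
  rw [hCD, hP_def, Matrix.fromBlocks_multiply, hGc,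
    ← Matrix.fromBlocks_one (l := Fin Nb) (m := Fin Nb) (α := ℂ),
    Matrix.fromBlocks_smul, Matrix.fromBlocks_smul, Matrix.fromBlocks_add,
    Matrix.fromBlocks_inj]
  refine ⟨by simp, by simp [htanh], ?_, ?_⟩
  · have h3 : -(Complex.I * s) * (Complex.I * c⁻¹) = s * c⁻¹ := by
      have he : -(Complex.I * s) * (Complex.I * c⁻¹)
          = -(Complex.I * Complex.I) * (s * c⁻¹) := by ring
      rw [he, Complex.I_mul_I]; ring
    rw [Matrix.mul_zero, add_zero, Matrix.smul_mul, Matrix.mul_smul, smul_smul,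
      Matrix.mul_one, h3, smul_zero, zero_add, htanh]
  · have h4 : -(Complex.I * s) * (s * c⁻¹) + Complex.I * c = Complex.I * c⁻¹ := by
      field_simp
      linear_combination hsq
    rw [Matrix.mul_one, Matrix.smul_mul, Matrix.mul_smul, smul_smul, hmul2, smul_zero,
      add_zero, ← add_smul, h4]
end

section
/- For a bipartite self-inverse G and Z' = i sech(2α) I + tanh(2α) G, the matrix Im[(I + Z'²) ∘ Z'] equals 2 sech(2α) tanh²(2α) (I + G) ∘ (I + G), which is positive semidefinite. -/
open Matrix

lemma gram_hadamard_psd {n : Type*} [Fintype n] [DecidableEq n] (L : Matrix n n ℝ) :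
    (Matrix.hadamard (Lᵀ * L) (Lᵀ * L)).PosSemidef := by
  have hK : Matrix.hadamard (Lᵀ * L) (Lᵀ * L) =
      (Matrix.of (fun p : n × n => fun i => L p.1 i * L p.2 i))ᴴ *
      (Matrix.of (fun p : n × n => fun i => L p.1 i * L p.2 i)) := by
    ext i j
    simp only [Matrix.hadamard_apply, Matrix.mul_apply, Matrix.conjTranspose_apply,
      Matrix.of_apply, Matrix.transpose_apply, star_trivial]
    rw [Finset.sum_mul_sum, ← Finset.sum_product', ← Finset.univ_product_univ]
    exact Finset.sum_congr rfl fun p _ => by ring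
  rw [hK]
  exact Matrix.posSemidef_conjTranspose_mul_self _

lemma psd_smul' {n : Type*} [Fintype n] (A : Matrix n n ℝ) (hA : A.PosSemidef)
    (s : ℝ) (hs : 0 ≤ s) : (s • A).PosSemidef := by
  refine ⟨?_, fun x => ?_⟩
  · unfold Matrix.IsHermitian
    rw [conjTranspose_smul, hA.1]
    simp
  · have := hA.2 x
    exact (hA.smul hs).2 x

theorem bipartite_selfinverse_hessian_psd {Nb : ℕ} (G₀ : Matrix (Fin Nb) (Fin Nb) ℝ)
    (hG₀₁ : G₀ᵀ * G₀ = 1) (hG₀₂ : G₀ * G₀ᵀ = 1) (α : ℝ) (hα : 0 < α) :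
    let G : Matrix (Fin Nb ⊕ Fin Nb) (Fin Nb ⊕ Fin Nb) ℝ := fromBlocks 0 G₀ᵀ G₀ 0
    let Z' : Matrix (Fin Nb ⊕ Fin Nb) (Fin Nb ⊕ Fin Nb) ℂ :=
      (Complex.I * ((Real.cosh (2 * α) : ℂ))⁻¹) • 1 +
        (Real.tanh (2 * α) : ℂ) • G.map Complex.ofReal
    let M : Matrix (Fin Nb ⊕ Fin Nb) (Fin Nb ⊕ Fin Nb) ℝ :=
      Matrix.of fun i j => ((Matrix.hadamard (1 + Z' * Z') Z') i j).im
    M = (2 * (Real.cosh (2 * α))⁻¹ * (Real.tanh (2 * α)) ^ 2) •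
        Matrix.hadamard (1 + G) (1 + G) ∧
      M.PosSemidef := by
  intro G Z' M
  set c := Real.cosh (2 * α) with hc_def
  set t := Real.tanh (2 * α) with ht_def
  have hc : 0 < c := Real.cosh_pos _
  -- G is symmetric
  have hGsymm : Gᵀ = G := by
    show (fromBlocks 0 G₀ᵀ G₀ 0)ᵀ = _
    simp [fromBlocks_transpose, G]
  -- G squares to 1
  have hGsq : G * G = 1 := by
    show fromBlocks 0 G₀ᵀ G₀ 0 * fromBlocks 0 G₀ᵀ G₀ 0 = 1
    rw [fromBlocks_multiply]
    simp [hG₀₁, hG₀₂, ← fromBlocks_one]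
  -- diagonal of G is zero
  have hGdiag : ∀ i, G i i = 0 := by
    intro i
    cases i with
    | inl a => simp [G, fromBlocks]
    | inr a => simp [G, fromBlocks]
  -- trig identity
  have htrig : c * c - 1 = t * t * (c * c) := by
    have h1 : c ^ 2 - Real.sinh (2 * α) ^ 2 = 1 := Real.cosh_sq_sub_sinh_sq (2 * α)
    have ht : t = Real.sinh (2 * α) / c := Real.tanh_eq_sinh_div_cosh (2 * α)
    rw [ht]
    field_simp
    nlinarith [h1]
  have hGm : G.map (Complex.ofReal) * G.map (Complex.ofReal) = 1 := by
    ext i j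
    simp only [Matrix.mul_apply, Matrix.map_apply, ← Complex.ofReal_mul, ← Complex.ofReal_sum]
    rw [← Matrix.mul_apply, hGsq]
    simp [Matrix.one_apply, apply_ite]
  have hZsq : Z' * Z' = ((Complex.I * (c : ℂ)⁻¹) ^ 2 + (t : ℂ) ^ 2) • 1 +
      (2 * (Complex.I * (c : ℂ)⁻¹) * t) • G.map Complex.ofReal := by
    show ((Complex.I * (c : ℂ)⁻¹) • 1 + (t : ℂ) • G.map Complex.ofReal) *
        ((Complex.I * (c : ℂ)⁻¹) • 1 + (t : ℂ) • G.map Complex.ofReal) = _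
    simp only [Matrix.add_mul, Matrix.mul_add, Matrix.smul_mul, Matrix.mul_smul,
      Matrix.one_mul, Matrix.mul_one, hGm, smul_smul, pow_two]
    module
  have hZel : ∀ i j, Z' i j = Complex.I * (c : ℂ)⁻¹ * (1 : Matrix _ _ ℂ) i j
      + (t : ℂ) * (G i j : ℂ) := by
    intro i j
    show ((Complex.I * (c : ℂ)⁻¹) • (1 : Matrix (Fin Nb ⊕ Fin Nb) (Fin Nb ⊕ Fin Nb) ℂ)
        + (t : ℂ) • G.map Complex.ofReal) i j = _
    simp [Matrix.map_apply]
  -- the key entrywise computation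
  have hM : M = (2 * c⁻¹ * t ^ 2) • Matrix.hadamard (1 + G) (1 + G) := by
    ext i j
    show ((Matrix.hadamard (1 + Z' * Z') Z') i j).im
        = ((2 * c⁻¹ * t ^ 2) • Matrix.hadamard (1 + G) (1 + G)) i j
    rw [Matrix.hadamard_apply, Matrix.add_apply, hZsq, hZel i j]
    simp only [Matrix.add_apply, Matrix.smul_apply, Matrix.map_apply, Matrix.hadamard_apply,
      smul_eq_mul]
    by_cases h : i = j
    · subst h
      rw [Matrix.one_apply_eq, Matrix.one_apply_eq, hGdiag i]
      simp only [Complex.ofReal_zero, mul_zero, add_zero, mul_one]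
      simp only [pow_two, Complex.add_im, Complex.add_re, Complex.mul_im, Complex.mul_re,
        Complex.ofReal_re, Complex.ofReal_im, Complex.I_re, Complex.I_im, Complex.one_re,
        Complex.one_im, Complex.inv_re, Complex.inv_im, Complex.normSq_ofReal]
      field_simp
      linear_combination (c * (c * c - 1) + c) * htrig
    · rw [Matrix.one_apply_ne h, Matrix.one_apply_ne h]
      simp only [mul_zero, zero_mul, zero_add, add_zero]
      simp only [pow_two, Complex.add_im, Complex.add_re, Complex.mul_im, Complex.mul_re,
        Complex.ofReal_re, Complex.ofReal_im, Complex.I_re, Complex.I_im, Complex.inv_re,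
        Complex.inv_im]
      ring_nf
      field_simp
      simp only [Complex.normSq_ofReal, Complex.re_ofNat]
      ring
  refine ⟨hM, ?_⟩
  rw [hM]
  apply psd_smul'
  · -- hadamard (1+G) (1+G) is PSD
    have hL : 1 + G = ((Real.sqrt 2)⁻¹ • (1 + G))ᵀ * ((Real.sqrt 2)⁻¹ • (1 + G)) := by
      rw [Matrix.transpose_smul, Matrix.transpose_add, Matrix.transpose_one, hGsymm,
        Matrix.smul_mul, Matrix.mul_smul, smul_smul]
      have h2 : (Real.sqrt 2)⁻¹ * (Real.sqrt 2)⁻¹ = 2⁻¹ := by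
        rw [← mul_inv, Real.mul_self_sqrt (by norm_num : (0:ℝ) ≤ 2)]
      have h3 : (1 + G) * (1 + G) = (2 : ℝ) • (1 + G) := by
        simp only [Matrix.add_mul, Matrix.mul_add, Matrix.one_mul, Matrix.mul_one, hGsq]
        module
      rw [h2, h3, smul_smul]
      norm_num [one_smul]
    rw [hL]
    exact gram_hadamard_psd _
  · positivity
end
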